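/- Let D be a smooth, deterministic, decomposable PROB with positive-weight-induced branch parameters, and suppose the sampling procedure at each decision node on variable x chooses the hi-branch with probability θ_hi·P(hi)/(θ_lo·P(lo) + θ_hi·P(hi)) (when the denominator is positive) and recursively combines child samples at conjunction nodes by union. Then the resulting distribution over complete assignments equals the W-proportional distribution on the satisfying assignments of the formula D represents: each satisfying τ is output with probability W(τ)/Σ_{τ' ⊨ F} W(τ'). -/

import Mathlib

/-- A PROB (probabilistic OBDD[∧]): true/false leaves, decision nodes on a
variable with lo/hi children, and conjunction nodes with a list of children. -/
inductive PROB (V : Type) : Type where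
  | tru : PROB V
  | fls : PROB V
  | dec (x : V) (lo hi : PROB V) : PROB V
  | conj (children : List (PROB V)) : PROB V

namespace PROB

variable {V : Type}

/-- The set of variables mentioned in the sub-PROB rooted at a node. -/
def vars [DecidableEq V] : PROB V → Finset V
  | .tru => ∅
  | .fls => ∅
  | .dec x lo hi => insert x (lo.vars ∪ hi.vars)
  | .conj cs => (cs.attach.map (fun c => c.1.vars)).foldr (· ∪ ·) ∅
decreasing_by
  all_goals simp_wf
  all_goals try omega
  all_goals (have h := List.sizeOf_lt_of_mem c.2; omega)

/-- Whether an assignment τ satisfies the PROB: the traversal following τ at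
decision nodes and visiting all children of conjunction nodes never reaches
the false node. -/
def satb : PROB V → (V → Bool) → Bool
  | .tru, _ => true
  | .fls, _ => false
  | .dec x lo hi, τ => if τ x then hi.satb τ else lo.satb τ
  | .conj cs, τ => cs.attach.all (fun c => c.1.satb τ)
decreasing_by
  all_goals simp_wf
  all_goals try omega
  all_goals (have h := List.sizeOf_lt_of_mem c.2; omega)

/-- Bottom-up joint probability annotation induced by a literal weight
function `W` (with `W x true` the weight of literal `x` and `W x false` the
weight of `¬x`): false ↦ 0, true ↦ 1, decision node ↦ θ_lo·P(lo) + θ_hi·P(hi)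
with normalized branch parameters, conjunction ↦ product of children. -/
noncomputable def jointP (W : V → Bool → ℝ) : PROB V → ℝ
  | .tru => 1
  | .fls => 0
  | .dec x lo hi =>
      (W x false / (W x true + W x false)) * jointP W lo +
      (W x true / (W x true + W x false)) * jointP W hi
  | .conj cs => (cs.attach.map (fun c => jointP W c.1)).prod
decreasing_by
  all_goals simp_wf
  all_goals try omega
  all_goals (have h := List.sizeOf_lt_of_mem c.2; omega)

/-- Structural invariants of a PROB: determinism is inherent in the decision
semantics; decomposability: conjunction children have pairwise disjoint
variable sets; smoothness: both children of a decision node mention the same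
variables; and the decision variable does not occur below the decision node. -/
inductive Wf [DecidableEq V] : PROB V → Prop
  | tru : Wf .tru
  | fls : Wf .fls
  | dec {x : V} {lo hi : PROB V} (hxlo : x ∉ lo.vars) (hxhi : x ∉ hi.vars)
      (hsmooth : lo.vars = hi.vars) (hlo : Wf lo) (hhi : Wf hi) :
      Wf (.dec x lo hi)
  | conj {cs : List (PROB V)} (h : ∀ c ∈ cs, Wf c)
      (hdecomp : cs.Pairwise (fun a b => Disjoint a.vars b.vars)) :
      Wf (.conj cs)

end PROB

namespace PROB

/-- The probability that the INC sampling procedure, run on the sub-PROB at a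
node, outputs a partial assignment agreeing with `τ` on the node's variables:
at a decision node on `x` the hi-branch is taken with probability
θ_hi·P(hi)/(θ_lo·P(lo) + θ_hi·P(hi)), and at a conjunction node the children's
independent samples are combined by union. -/
noncomputable def sampP {V : Type} (W : V → Bool → ℝ) : PROB V → (V → Bool) → ℝ
  | .tru, _ => 1
  | .fls, _ => 0
  | .dec x lo hi, τ =>
      if τ x then
        ((W x true / (W x true + W x false)) * jointP W hi /
          ((W x false / (W x true + W x false)) * jointP W lo +
           (W x true / (W x true + W x false)) * jointP W hi)) * sampP W hi τ
      else
        ((W x false / (W x true + W x false)) * jointP W lo /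
          ((W x false / (W x true + W x false)) * jointP W lo +
           (W x true / (W x true + W x false)) * jointP W hi)) * sampP W lo τ
  | .conj cs, τ => (cs.attach.map (fun c => sampP W c.1 τ)).prod
decreasing_by
  all_goals simp_wf
  all_goals try omega
  all_goals (have h := List.sizeOf_lt_of_mem c.2; omega)

end PROB
set_option linter.unusedSectionVars false
namespace PROB

variable {V : Type} [Fintype V] [DecidableEq V]

lemma mem_foldr_union (v : V) : ∀ (l : List (Finset V)),
    (v ∈ l.foldr (· ∪ ·) ∅ ↔ ∃ s ∈ l, v ∈ s)
  | [] => by simp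
  | s :: l => by
      simp [List.foldr_cons, Finset.mem_union, mem_foldr_union v l]

lemma mem_vars_conj {v : V} {cs : List (PROB V)} :
    v ∈ (PROB.conj cs).vars ↔ ∃ c ∈ cs, v ∈ c.vars := by
  rw [vars, mem_foldr_union]
  simp

theorem satb_congr : ∀ (D : PROB V) (σ σ' : V → Bool),
    (∀ v ∈ D.vars, σ v = σ' v) → D.satb σ = D.satb σ'
  | .tru, _, _, _ => by simp [satb]
  | .fls, _, _, _ => by simp [satb]
  | .dec x lo hi, σ, σ', h => by
      have hx : σ x = σ' x := h x (by simp [vars])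
      have hlo : lo.satb σ = lo.satb σ' :=
        satb_congr lo σ σ' (fun v hv => h v (by simp [vars, hv]))
      have hhi : hi.satb σ = hi.satb σ' :=
        satb_congr hi σ σ' (fun v hv => h v (by simp [vars, hv]))
      simp only [satb, hx, hlo, hhi]
  | .conj cs, σ, σ', h => by
      simp only [satb]
      rw [Bool.eq_iff_iff]
      simp only [List.all_eq_true, List.mem_attach, true_implies, Subtype.forall]
      constructor
      · intro hall c hc
        rw [← satb_congr c σ σ' (fun v hv => h v (mem_vars_conj.2 ⟨c, hc, hv⟩))]
        exact hall c hc
      · intro hall c hc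
        rw [satb_congr c σ σ' (fun v hv => h v (mem_vars_conj.2 ⟨c, hc, hv⟩))]
        exact hall c hc
decreasing_by
  all_goals simp_wf
  all_goals try omega
  all_goals (have h := List.sizeOf_lt_of_mem hc; omega)

end PROB
namespace PROB

variable {V : Type} [Fintype V] [DecidableEq V]

/-- Total weight of all assignments. -/
noncomputable def Zw (W : V → Bool → ℝ) : ℝ := ∑ σ : V → Bool, ∏ v, W v (σ v)

/-- Total weight of satisfying assignments of `D`. -/
noncomputable def Tw (W : V → Bool → ℝ) (D : PROB V) : ℝ :=
  ∑ σ : V → Bool, if D.satb σ = true then ∏ v, W v (σ v) else 0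

/-- Total weight of assignments agreeing with `τ` on `D.vars`. -/
noncomputable def Uw (W : V → Bool → ℝ) (D : PROB V) (τ : V → Bool) : ℝ :=
  ∑ σ : V → Bool, if (∀ v ∈ D.vars, σ v = τ v) then ∏ v, W v (σ v) else 0

noncomputable def Xw (W : V → Bool → ℝ) (x : V) (b : Bool) : ℝ :=
  ∑ σ : V → Bool, if σ x = b then ∏ v, W v (σ v) else 0

variable {W : V → Bool → ℝ}

lemma Zw_pos (hW : ∀ v b, 0 < W v b) : 0 < Zw W := by
  have : (Finset.univ : Finset (V → Bool)).Nonempty := ⟨fun _ => true, Finset.mem_univ _⟩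
  exact Finset.sum_pos (fun σ _ => Finset.prod_pos fun v _ => hW v _) this

lemma Tw_pos (hW : ∀ v b, 0 < W v b) {D : PROB V} {τ : V → Bool}
    (hτ : D.satb τ = true) : 0 < Tw W D := by
  refine Finset.sum_pos' (fun σ _ => ?_) ⟨τ, Finset.mem_univ _, ?_⟩
  · by_cases h : D.satb σ = true
    · rw [if_pos h]; exact le_of_lt (Finset.prod_pos fun v _ => hW v _)
    · rw [if_neg h]
  · rw [if_pos hτ]
    exact Finset.prod_pos fun v _ => hW v _

lemma prod_update (W : V → Bool → ℝ) (σ : V → Bool) (x : V) (b : Bool) :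
    W x (σ x) * ∏ v, W v (Function.update σ x b v) = W x b * ∏ v, W v (σ v) := by
  have h1 : (fun v => W v (Function.update σ x b v)) =
      Function.update (fun v => W v (σ v)) x (W x b) := by
    funext v
    by_cases hv : v = x
    · subst hv; simp
    · simp [Function.update_of_ne hv]
  calc W x (σ x) * ∏ v, W v (Function.update σ x b v)
      = W x (σ x) * ∏ v, Function.update (fun v => W v (σ v)) x (W x b) v := by rw [h1]
    _ = W x (σ x) * (W x b * ∏ v ∈ Finset.univ \ {x}, W v (σ v)) := by
        rw [Finset.prod_update_of_mem (Finset.mem_univ x)]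
    _ = W x b * (W x (σ x) * ∏ v ∈ Finset.univ \ {x}, W v (σ v)) := by ring
    _ = W x b * ∏ v, W v (σ v) := by
        rw [← Finset.prod_eq_mul_prod_sdiff_singleton_of_mem (Finset.mem_univ x)
          (fun v => W v (σ v))]

/-- The key independence/factorization lemma. -/
lemma split_sum (W : V → Bool → ℝ) (s : Finset V) (p q : (V → Bool) → Prop)
    [DecidablePred p] [DecidablePred q]
    (hp : ∀ σ σ' : V → Bool, (∀ v ∈ s, σ v = σ' v) → (p σ ↔ p σ'))
    (hq : ∀ σ σ' : V → Bool, (∀ v ∉ s, σ v = σ' v) → (q σ ↔ q σ')) :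
    (∑ σ : V → Bool, if p σ ∧ q σ then ∏ v, W v (σ v) else 0) * Zw W =
    (∑ σ : V → Bool, if p σ then ∏ v, W v (σ v) else 0) *
    (∑ σ : V → Bool, if q σ then ∏ v, W v (σ v) else 0) := by
  classical
  set mix : (V → Bool) → (V → Bool) → (V → Bool) :=
    fun a b v => if v ∈ s then a v else b v with hmixdef
  have hmixmix : ∀ a b : V → Bool, mix (mix a b) (mix b a) = a := by
    intro a b; funext v; by_cases hv : v ∈ s <;> simp [hmixdef, hv]
  set e : ((V → Bool) × (V → Bool)) → ((V → Bool) × (V → Bool)) :=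
    fun pr => (mix pr.1 pr.2, mix pr.2 pr.1) with hedef
  have he : Function.Bijective e := by
    have hinv : Function.Involutive e := fun pr => by simp [hedef, hmixmix]
    exact hinv.bijective
  rw [Zw, Finset.sum_mul_sum, Finset.sum_mul_sum]
  rw [← Fintype.sum_prod_type', ← Fintype.sum_prod_type']
  refine Fintype.sum_bijective e he _ _ fun pr => ?_
  obtain ⟨σ, σ'⟩ := pr
  have hps : p (mix σ σ') ↔ p σ := hp _ _ (fun v hv => by simp [hmixdef, hv])
  have hqs : q (mix σ' σ) ↔ q σ := hq _ _ (fun v hv => by simp [hmixdef, hv])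
  have hprod : (∏ v, W v (mix σ σ' v)) * ∏ v, W v (mix σ' σ v) =
      (∏ v, W v (σ v)) * ∏ v, W v (σ' v) := by
    rw [← Finset.prod_mul_distrib, ← Finset.prod_mul_distrib]
    refine Finset.prod_congr rfl fun v _ => ?_
    by_cases hv : v ∈ s <;> simp [hmixdef, hv] <;> ring
  show (if p σ ∧ q σ then ∏ v, W v (σ v) else 0) * (∏ v, W v (σ' v)) =
      (if p (mix σ σ') then ∏ v, W v (mix σ σ' v) else 0) *
      (if q (mix σ' σ) then ∏ v, W v (mix σ' σ v) else 0)
  by_cases hpσ : p σ <;> by_cases hqσ : q σ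
  · rw [if_pos ⟨hpσ, hqσ⟩, if_pos (hps.2 hpσ), if_pos (hqs.2 hqσ), hprod]
  · have hq' : ¬ q (mix σ' σ) := fun h => hqσ (hqs.1 h)
    rw [if_neg (show ¬(p σ ∧ q σ) by tauto), if_neg hq']; ring
  · have hp' : ¬ p (mix σ σ') := fun h => hpσ (hps.1 h)
    rw [if_neg (show ¬(p σ ∧ q σ) by tauto), if_neg hp']; ring
  · have hp' : ¬ p (mix σ σ') := fun h => hpσ (hps.1 h)
    rw [if_neg (show ¬(p σ ∧ q σ) by tauto), if_neg hp']; ring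

lemma Xw_swap (x : V) (b : Bool) :
    W x (!b) * Xw W x b = W x b * Xw W x (!b) := by
  classical
  rw [Xw, Xw, Finset.mul_sum, Finset.mul_sum]
  set e : (V → Bool) → (V → Bool) := fun σ => Function.update σ x (!σ x) with hedef
  have he : Function.Bijective e := by
    have hinv : Function.Involutive e := fun σ => by
      funext v; by_cases hv : v = x <;> simp [hedef, hv]
    exact hinv.bijective
  refine Fintype.sum_bijective e he _ _ fun σ => ?_
  show (W x !b) * (if σ x = b then ∏ v, W v (σ v) else 0) =
      W x b * (if Function.update σ x (!σ x) x = !b then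
        ∏ v, W v (Function.update σ x (!σ x) v) else 0)
  simp only [Function.update_self]
  by_cases hb : σ x = b
  · have hcond : (!σ x) = !b := by rw [hb]
    rw [if_pos hb, if_pos hcond]
    have := prod_update W σ x (!σ x)
    rw [hb] at this ⊢
    linarith [this]
  · have hcond : ¬((!σ x) = !b) := by
      intro h; apply hb; cases b <;> cases hσ : σ x <;> simp_all
    rw [if_neg hb, if_neg hcond]
    ring

lemma Xw_val (hW : ∀ v b, 0 < W v b) (x : V) (b : Bool) :
    (W x true + W x false) * Xw W x b = W x b * Zw W := by
  have hsplit : Zw W = Xw W x true + Xw W x false := by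
    rw [Zw, Xw, Xw, ← Finset.sum_add_distrib]
    refine Finset.sum_congr rfl fun σ _ => ?_
    cases hσ : σ x <;> simp [hσ]
  have h1 := Xw_swap (W := W) x true
  have h2 := Xw_swap (W := W) x false
  simp only [Bool.not_true, Bool.not_false] at h1 h2
  cases b <;> rw [hsplit] <;> ring_nf <;> linarith

end PROB
namespace PROB

variable {V : Type} [Fintype V] [DecidableEq V] {W : V → Bool → ℝ}

lemma prod_map_mul {α : Type*} (l : List α) (f g : α → ℝ) :
    (l.map (fun x => f x * g x)).prod = (l.map f).prod * (l.map g).prod := by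
  induction l with
  | nil => simp
  | cons a l ih => simp [ih]; ring

lemma prod_map_const_mul {α : Type*} (l : List α) (a : ℝ) (f : α → ℝ) :
    (l.map (fun x => a * f x)).prod = a ^ l.length * (l.map f).prod := by
  induction l with
  | nil => simp
  | cons b l ih => simp [ih, pow_succ]; ring

lemma list_split (W : V → Bool → ℝ) (Q : PROB V → (V → Bool) → Prop)
    [∀ c, DecidablePred (Q c)] :
    ∀ (cs : List (PROB V)),
    (∀ c ∈ cs, ∀ σ σ' : V → Bool, (∀ v ∈ c.vars, σ v = σ' v) → (Q c σ ↔ Q c σ')) →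
    cs.Pairwise (fun a b => Disjoint a.vars b.vars) →
    Zw W ^ cs.length *
      (∑ σ : V → Bool, if (∀ c ∈ cs, Q c σ) then ∏ v, W v (σ v) else 0) =
    Zw W * (cs.map (fun c => ∑ σ : V → Bool,
      if Q c σ then ∏ v, W v (σ v) else 0)).prod := by
  intro cs
  induction cs with
  | nil => intro _ _; simp [Zw]
  | cons c cs ih =>
      intro hQ hdisj
      have hdisj' : ∀ c' ∈ cs, Disjoint c.vars c'.vars :=
        (List.pairwise_cons.1 hdisj).1
      have htail : cs.Pairwise (fun a b => Disjoint a.vars b.vars) :=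
        (List.pairwise_cons.1 hdisj).2
      have hQtail : ∀ c' ∈ cs, ∀ σ σ' : V → Bool,
          (∀ v ∈ c'.vars, σ v = σ' v) → (Q c' σ ↔ Q c' σ') :=
        fun c' hc' => hQ c' (List.mem_cons_of_mem _ hc')
      have hstep :
          (∑ σ : V → Bool, if (∀ c'' ∈ c :: cs, Q c'' σ) then ∏ v, W v (σ v) else 0)
            * Zw W =
          (∑ σ : V → Bool, if Q c σ then ∏ v, W v (σ v) else 0) *
          (∑ σ : V → Bool, if (∀ c' ∈ cs, Q c' σ) then ∏ v, W v (σ v) else 0) := by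
        have h := split_sum W c.vars (Q c) (fun σ => ∀ c' ∈ cs, Q c' σ)
          (hQ c List.mem_cons_self)
          (fun σ σ' hagree => by
            constructor
            · intro hall c' hc'
              rw [← hQtail c' hc' σ σ' (fun v hv =>
                hagree v (Finset.disjoint_right.1 (hdisj' c' hc') hv))]
              exact hall c' hc'
            · intro hall c' hc'
              rw [hQtail c' hc' σ σ' (fun v hv =>
                hagree v (Finset.disjoint_right.1 (hdisj' c' hc') hv))]
              exact hall c' hc')
        rw [← h]
        congr 1
        refine Finset.sum_congr rfl fun σ _ => ?_
        refine if_congr ?_ rfl rfl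
        simp [List.forall_mem_cons]
      have ihv := ih hQtail htail
      calc Zw W ^ (c :: cs).length *
            (∑ σ : V → Bool, if (∀ c'' ∈ c :: cs, Q c'' σ) then ∏ v, W v (σ v) else 0)
          = Zw W ^ cs.length *
            ((∑ σ : V → Bool, if (∀ c'' ∈ c :: cs, Q c'' σ) then ∏ v, W v (σ v) else 0)
              * Zw W) := by
            simp [List.length_cons, pow_succ]; ring
        _ = Zw W ^ cs.length *
            ((∑ σ : V → Bool, if Q c σ then ∏ v, W v (σ v) else 0) *
             (∑ σ : V → Bool, if (∀ c' ∈ cs, Q c' σ) then ∏ v, W v (σ v) else 0)) := by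
            rw [hstep]
        _ = (∑ σ : V → Bool, if Q c σ then ∏ v, W v (σ v) else 0) *
            (Zw W ^ cs.length *
             (∑ σ : V → Bool, if (∀ c' ∈ cs, Q c' σ) then ∏ v, W v (σ v) else 0)) := by
            ring
        _ = (∑ σ : V → Bool, if Q c σ then ∏ v, W v (σ v) else 0) *
            (Zw W * (cs.map (fun c => ∑ σ : V → Bool,
              if Q c σ then ∏ v, W v (σ v) else 0)).prod) := by rw [ihv]
        _ = Zw W * ((c :: cs).map (fun c => ∑ σ : V → Bool,
              if Q c σ then ∏ v, W v (σ v) else 0)).prod := by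
            simp [List.map_cons]; ring

lemma satb_conj_iff {cs : List (PROB V)} {σ : V → Bool} :
    (PROB.conj cs).satb σ = true ↔ ∀ c ∈ cs, c.satb σ = true := by
  rw [satb]
  simp [List.all_eq_true]

lemma Tw_conj (cs : List (PROB V))
    (hwf : ∀ c ∈ cs, Wf c)
    (hdisj : cs.Pairwise (fun a b => Disjoint a.vars b.vars)) :
    Zw W ^ cs.length * Tw W (PROB.conj cs) =
      Zw W * (cs.map (Tw W)).prod := by
  classical
  have h := list_split W (fun c σ => c.satb σ = true) cs
    (fun c _ σ σ' hag => by rw [satb_congr c σ σ' hag]) hdisj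
  rw [Tw]
  calc Zw W ^ cs.length * (∑ σ : V → Bool,
        if (PROB.conj cs).satb σ = true then ∏ v, W v (σ v) else 0)
      = Zw W ^ cs.length * (∑ σ : V → Bool,
        if (∀ c ∈ cs, c.satb σ = true) then ∏ v, W v (σ v) else 0) := by
        congr 1
        refine Finset.sum_congr rfl fun σ _ => if_congr satb_conj_iff rfl rfl
    _ = Zw W * (cs.map (Tw W)).prod := by rw [h]; rfl

lemma Uw_conj (cs : List (PROB V)) (τ : V → Bool)
    (hdisj : cs.Pairwise (fun a b => Disjoint a.vars b.vars)) :
    Zw W ^ cs.length * Uw W (PROB.conj cs) τ =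
      Zw W * (cs.map (fun c => Uw W c τ)).prod := by
  classical
  have h := list_split W (fun c σ => ∀ v ∈ c.vars, σ v = τ v) cs
    (fun c _ σ σ' hag => by
      constructor
      · intro hall v hv; rw [← hag v hv]; exact hall v hv
      · intro hall v hv; rw [hag v hv]; exact hall v hv) hdisj
  rw [Uw]
  calc Zw W ^ cs.length * (∑ σ : V → Bool,
        if (∀ v ∈ (PROB.conj cs).vars, σ v = τ v) then ∏ v, W v (σ v) else 0)
      = Zw W ^ cs.length * (∑ σ : V → Bool,
        if (∀ c ∈ cs, ∀ v ∈ c.vars, σ v = τ v) then ∏ v, W v (σ v) else 0) := by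
        congr 1
        refine Finset.sum_congr rfl fun σ _ => if_congr ?_ rfl rfl
        constructor
        · intro hall c hc v hv; exact hall v (mem_vars_conj.2 ⟨c, hc, hv⟩)
        · intro hall v hv
          obtain ⟨c, hc, hvc⟩ := mem_vars_conj.1 hv
          exact hall c hc v hvc
    _ = Zw W * (cs.map (fun c => Uw W c τ)).prod := by rw [h]; rfl

end PROB
namespace PROB

variable {V : Type} [Fintype V] [DecidableEq V]

lemma attach_map_prod {α : Type} (cs : List α) (f : α → ℝ) :
    (cs.attach.map (fun c => f c.1)).prod = (cs.map f).prod := by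
  congr 1; simp

theorem jointP_eq (W : V → Bool → ℝ) (hW : ∀ v b, 0 < W v b) :
    ∀ (D : PROB V), D.Wf → Zw W * jointP W D = Tw W D
  | .tru, _ => by
      rw [jointP, Tw, Zw]
      simp [satb]
  | .fls, _ => by
      rw [jointP, Tw]
      simp [satb]
  | .dec x lo hi, hwf => by
      classical
      obtain ⟨hxlo, hxhi, hsmooth, hlo, hhi⟩ :
          x ∉ lo.vars ∧ x ∉ hi.vars ∧ lo.vars = hi.vars ∧ lo.Wf ∧ hi.Wf := by
        cases hwf with
        | dec hxlo hxhi hsmooth hlo hhi => exact ⟨hxlo, hxhi, hsmooth, hlo, hhi⟩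
      have IHlo := jointP_eq W hW lo hlo
      have IHhi := jointP_eq W hW hi hhi
      have hZ : 0 < Zw W := Zw_pos hW
      have hWtf : 0 < W x true + W x false := by
        have := hW x true; have := hW x false; linarith
      -- Decompose Tw of the decision node.
      set Shi : ℝ := ∑ σ : V → Bool,
        if (σ x = true ∧ hi.satb σ = true) then ∏ v, W v (σ v) else 0 with hShi
      set Slo : ℝ := ∑ σ : V → Bool,
        if (σ x = false ∧ lo.satb σ = true) then ∏ v, W v (σ v) else 0 with hSlo
      have hT : Tw W (PROB.dec x lo hi) = Shi + Slo := by
        rw [Tw, hShi, hSlo, ← Finset.sum_add_distrib]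
        refine Finset.sum_congr rfl fun σ _ => ?_
        rw [satb]
        cases hσ : σ x <;> by_cases hs : (if σ x = true then hi.satb σ
            else lo.satb σ) = true <;> rw [hσ] at hs <;> simp [hσ, hs] at * <;>
          simp [hs]
      have hsplithi : Shi * Zw W = Xw W x true * Tw W hi := by
        rw [hShi, Xw, Tw]
        exact split_sum W {x} (fun σ => σ x = true) (fun σ => hi.satb σ = true)
          (fun σ σ' h => by rw [h x (Finset.mem_singleton_self x)])
          (fun σ σ' h => by
            rw [satb_congr hi σ σ' (fun v hv => h v (by
              intro hvx
              rw [Finset.mem_singleton] at hvx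
              exact hxhi (hvx ▸ hv)))])
      have hsplitlo : Slo * Zw W = Xw W x false * Tw W lo := by
        rw [hSlo, Xw, Tw]
        exact split_sum W {x} (fun σ => σ x = false) (fun σ => lo.satb σ = true)
          (fun σ σ' h => by rw [h x (Finset.mem_singleton_self x)])
          (fun σ σ' h => by
            rw [satb_congr lo σ σ' (fun v hv => h v (by
              intro hvx
              rw [Finset.mem_singleton] at hvx
              exact hxlo (hvx ▸ hv)))])
      have hXt := Xw_val (W := W) hW x true
      have hXf := Xw_val (W := W) hW x false
      have hjd : (W x true + W x false) * jointP W (PROB.dec x lo hi) =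
          W x false * jointP W lo + W x true * jointP W hi := by
        rw [jointP]
        field_simp
      have hkey : ((W x true + W x false) * Zw W) * (Zw W * jointP W (PROB.dec x lo hi))
          = ((W x true + W x false) * Zw W) * (Shi + Slo) := by
        linear_combination (Zw W)^2 * hjd + Zw W * W x false * IHlo +
          Zw W * W x true * IHhi - (W x true + W x false) * hsplithi -
          (W x true + W x false) * hsplitlo - Tw W hi * hXt - Tw W lo * hXf
      have hne : (W x true + W x false) * Zw W ≠ 0 := by positivity
      rw [← hT] at hkey
      exact mul_left_cancel₀ hne hkey
  | .conj cs, hwf => by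
      classical
      obtain ⟨hcs, hdisj⟩ :
          (∀ c ∈ cs, Wf c) ∧ cs.Pairwise (fun a b => Disjoint a.vars b.vars) := by
        cases hwf with
        | conj h hdecomp => exact ⟨h, hdecomp⟩
      have IH : ∀ c ∈ cs, Zw W * jointP W c = Tw W c :=
        fun c hc => jointP_eq W hW c (hcs c hc)
      have hZ : 0 < Zw W := Zw_pos hW
      have hZk : Zw W ^ cs.length ≠ 0 := by positivity
      have hconj := Tw_conj (W := W) cs hcs hdisj
      have hprodeq : (cs.map (fun c => Zw W * jointP W c)).prod
          = (cs.map (Tw W)).prod := by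
        congr 1
        exact List.map_congr_left IH
      apply mul_left_cancel₀ hZk
      rw [jointP, attach_map_prod]
      calc Zw W ^ cs.length * (Zw W * (cs.map (jointP W)).prod)
          = Zw W * (Zw W ^ cs.length * (cs.map (jointP W)).prod) := by ring
        _ = Zw W * (cs.map (fun c => Zw W * jointP W c)).prod := by
            rw [prod_map_const_mul]
        _ = Zw W * (cs.map (Tw W)).prod := by rw [hprodeq]
        _ = Zw W ^ cs.length * Tw W (PROB.conj cs) := hconj.symm
decreasing_by
  all_goals simp_wf
  all_goals try omega
  all_goals (have h := List.sizeOf_lt_of_mem hc; omega)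

lemma Uw_tru (W : V → Bool → ℝ) (τ : V → Bool) : Uw W PROB.tru τ = Zw W := by
  rw [Uw, Zw]
  refine Finset.sum_congr rfl fun σ _ => ?_
  rw [if_pos]
  intro v hv
  simp [vars] at hv

lemma Uw_dec (W : V → Bool → ℝ) (hW : ∀ v b, 0 < W v b)
    {x : V} {lo hi : PROB V} (τ : V → Bool)
    (hxhi : x ∉ hi.vars) (hsmooth : lo.vars = hi.vars) :
    (W x true + W x false) * Uw W (PROB.dec x lo hi) τ =
      W x (τ x) * Uw W hi τ := by
  classical
  have hZ : 0 < Zw W := Zw_pos hW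
  have hvars : (PROB.dec x lo hi).vars = insert x hi.vars := by
    rw [vars, hsmooth, Finset.union_self]
  have hsplit : Uw W (PROB.dec x lo hi) τ * Zw W = Xw W x (τ x) * Uw W hi τ := by
    have h := split_sum W {x} (fun σ => σ x = τ x) (fun σ => ∀ v ∈ hi.vars, σ v = τ v)
      (fun σ σ' h => by rw [h x (Finset.mem_singleton_self x)])
      (fun σ σ' h => by
        constructor
        · intro hall v hv
          rw [← h v (by
            intro hvx
            rw [Finset.mem_singleton] at hvx
            exact hxhi (hvx ▸ hv))]
          exact hall v hv
        · intro hall v hv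
          rw [h v (by
            intro hvx
            rw [Finset.mem_singleton] at hvx
            exact hxhi (hvx ▸ hv))]
          exact hall v hv)
    rw [Uw, Xw, Uw, ← h]
    congr 1
    refine Finset.sum_congr rfl fun σ _ => if_congr ?_ rfl rfl
    rw [hvars]
    simp only [Finset.mem_insert]
    constructor
    · intro hall
      exact ⟨hall x (Or.inl rfl), fun v hv => hall v (Or.inr hv)⟩
    · rintro ⟨h1, h2⟩ v hv
      rcases hv with rfl | hv
      · exact h1
      · exact h2 v hv
  have hX := Xw_val (W := W) hW x (τ x)
  have hZne : Zw W ≠ 0 := ne_of_gt hZ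
  apply mul_right_cancel₀ hZne
  calc (W x true + W x false) * Uw W (PROB.dec x lo hi) τ * Zw W
      = (W x true + W x false) * (Uw W (PROB.dec x lo hi) τ * Zw W) := by ring
    _ = (W x true + W x false) * (Xw W x (τ x) * Uw W hi τ) := by rw [hsplit]
    _ = ((W x true + W x false) * Xw W x (τ x)) * Uw W hi τ := by ring
    _ = (W x (τ x) * Zw W) * Uw W hi τ := by rw [hX]
    _ = W x (τ x) * Uw W hi τ * Zw W := by ring

end PROB
namespace PROB

variable {V : Type} [Fintype V] [DecidableEq V]

theorem sampP_unsat (W : V → Bool → ℝ) :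
    ∀ (D : PROB V) (τ : V → Bool), D.satb τ = false → sampP W D τ = 0
  | .tru, τ, h => by rw [satb] at h; exact absurd h (by simp)
  | .fls, τ, _ => by rw [sampP]
  | .dec x lo hi, τ, h => by
      rw [satb] at h
      rw [sampP]
      cases hx : τ x
      · rw [hx] at h
        rw [if_neg (by simp), sampP_unsat W lo τ (by simpa using h), mul_zero]
      · rw [hx] at h
        rw [if_pos rfl, sampP_unsat W hi τ (by simpa using h), mul_zero]
  | .conj cs, τ, h => by
      rw [satb] at h
      rw [sampP]
      rw [List.all_eq_false] at h
      obtain ⟨c, hc, hcf⟩ := h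
      refine List.prod_eq_zero ?_
      refine List.mem_map.2 ⟨c, hc, ?_⟩
      exact sampP_unsat W c.1 τ (by simpa using hcf)
decreasing_by
  all_goals simp_wf
  all_goals try omega
  all_goals first
    | (have h := List.sizeOf_lt_of_mem hc; omega)
    | (have h := List.sizeOf_lt_of_mem c.2; omega)

theorem sampP_sat (W : V → Bool → ℝ) (hW : ∀ v b, 0 < W v b) :
    ∀ (D : PROB V) (τ : V → Bool), D.Wf → D.satb τ = true →
      sampP W D τ * Tw W D = Uw W D τ
  | .tru, τ, _, _ => by
      rw [sampP, Uw_tru, one_mul, Tw, Zw]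
      refine Finset.sum_congr rfl fun σ _ => ?_
      rw [if_pos (by simp [satb])]
  | .fls, τ, _, hsat => by simp [satb] at hsat
  | .dec x lo hi, τ, hwf, hsat => by
      classical
      obtain ⟨hxlo, hxhi, hsmooth, hlo, hhi⟩ :
          x ∉ lo.vars ∧ x ∉ hi.vars ∧ lo.vars = hi.vars ∧ lo.Wf ∧ hi.Wf := by
        cases hwf with
        | dec hxlo hxhi hsmooth hlo hhi => exact ⟨hxlo, hxhi, hsmooth, hlo, hhi⟩
      have hZ : 0 < Zw W := Zw_pos hW
      have hTd : 0 < Tw W (PROB.dec x lo hi) := Tw_pos hW hsat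
      have hWtf : 0 < W x true + W x false := by
        have := hW x true; have := hW x false; linarith
      have hjA := jointP_eq W hW (PROB.dec x lo hi) hwf
      have hjd_pos : 0 < jointP W (PROB.dec x lo hi) := by
        have : Zw W * jointP W (PROB.dec x lo hi) > 0 := by rw [hjA]; exact hTd
        nlinarith
      have hUdec := Uw_dec W hW (x := x) (lo := lo) (hi := hi) τ hxhi hsmooth
      have hjd : (W x false / (W x true + W x false)) * jointP W lo +
          (W x true / (W x true + W x false)) * jointP W hi =
          jointP W (PROB.dec x lo hi) := by rw [jointP]
      rw [sampP]
      cases hx : τ x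
      · -- low branch
        rw [satb, hx] at hsat
        rw [if_neg (by simp)]
        have hsatlo : lo.satb τ = true := by simpa using hsat
        have IH := sampP_sat W hW lo τ hlo hsatlo
        have hjAlo := jointP_eq W hW lo hlo
        have hUlo : Uw W lo τ = Uw W hi τ := by rw [Uw, Uw, hsmooth]
        rw [hjd]
        -- goal : (θl * jlo / jd) * sampP lo τ * Td = Uw (dec) τ
        have hgoal : (W x false / (W x true + W x false)) * jointP W lo /
            jointP W (PROB.dec x lo hi) * sampP W lo τ *
            Tw W (PROB.dec x lo hi) =
            (W x false / (W x true + W x false)) * jointP W lo *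
            sampP W lo τ * (Tw W (PROB.dec x lo hi) /
              jointP W (PROB.dec x lo hi)) := by ring
        rw [hgoal]
        have hTdj : Tw W (PROB.dec x lo hi) / jointP W (PROB.dec x lo hi) = Zw W := by
          rw [← hjA]; field_simp
        rw [hTdj]
        -- now : θl * jlo * sampP lo * Z = Uw dec
        -- Z * jlo = Tlo ; sampP lo * Tlo = Ulo ; (Wt+Wf) * Udec = W x false * Uhi
        have : W x false / (W x true + W x false) * jointP W lo * sampP W lo τ *
            Zw W = W x false / (W x true + W x false) * (sampP W lo τ *
            (Zw W * jointP W lo)) := by ring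
        rw [this, hjAlo, IH, hUlo]
        rw [eq_comm, ← sub_eq_zero]
        have hW' : W x true + W x false ≠ 0 := ne_of_gt hWtf
        field_simp
        rw [hx] at hUdec
        linarith [hUdec]
      · -- high branch
        rw [satb, hx] at hsat
        rw [if_pos rfl]
        have hsathi : hi.satb τ = true := by simpa using hsat
        have IH := sampP_sat W hW hi τ hhi hsathi
        have hjAhi := jointP_eq W hW hi hhi
        rw [hjd]
        have hgoal : (W x true / (W x true + W x false)) * jointP W hi /
            jointP W (PROB.dec x lo hi) * sampP W hi τ *
            Tw W (PROB.dec x lo hi) =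
            (W x true / (W x true + W x false)) * jointP W hi *
            sampP W hi τ * (Tw W (PROB.dec x lo hi) /
              jointP W (PROB.dec x lo hi)) := by ring
        rw [hgoal]
        have hTdj : Tw W (PROB.dec x lo hi) / jointP W (PROB.dec x lo hi) = Zw W := by
          rw [← hjA]; field_simp
        rw [hTdj]
        have : W x true / (W x true + W x false) * jointP W hi * sampP W hi τ *
            Zw W = W x true / (W x true + W x false) * (sampP W hi τ *
            (Zw W * jointP W hi)) := by ring
        rw [this, hjAhi, IH]
        rw [eq_comm, ← sub_eq_zero]
        have hW' : W x true + W x false ≠ 0 := ne_of_gt hWtf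
        field_simp
        rw [hx] at hUdec
        linarith [hUdec]
  | .conj cs, τ, hwf, hsat => by
      classical
      obtain ⟨hcs, hdisj⟩ :
          (∀ c ∈ cs, Wf c) ∧ cs.Pairwise (fun a b => Disjoint a.vars b.vars) := by
        cases hwf with
        | conj h hdecomp => exact ⟨h, hdecomp⟩
      have hsatc : ∀ c ∈ cs, c.satb τ = true := satb_conj_iff.1 hsat
      have IH : ∀ c ∈ cs, sampP W c τ * Tw W c = Uw W c τ :=
        fun c hc => sampP_sat W hW c τ (hcs c hc) (hsatc c hc)
      have hZ : 0 < Zw W := Zw_pos hW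
      have hZk : Zw W ^ cs.length ≠ 0 := by positivity
      have hTc := Tw_conj (W := W) cs hcs hdisj
      have hUc := Uw_conj (W := W) cs τ hdisj
      have hattach : (cs.attach.map (fun c => sampP W c.1 τ)).prod =
          (cs.map (fun c => sampP W c τ)).prod :=
        attach_map_prod cs (fun d => sampP W d τ)
      apply mul_left_cancel₀ hZk
      rw [sampP, hattach]
      calc Zw W ^ cs.length * ((cs.map (fun c => sampP W c τ)).prod *
            Tw W (PROB.conj cs))
          = (cs.map (fun c => sampP W c τ)).prod *
            (Zw W ^ cs.length * Tw W (PROB.conj cs)) := by ring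
        _ = (cs.map (fun c => sampP W c τ)).prod *
            (Zw W * (cs.map (Tw W)).prod) := by rw [hTc]
        _ = Zw W * ((cs.map (fun c => sampP W c τ)).prod *
            (cs.map (Tw W)).prod) := by ring
        _ = Zw W * (cs.map (fun c => sampP W c τ * Tw W c)).prod := by
            rw [prod_map_mul]
        _ = Zw W * (cs.map (fun c => Uw W c τ)).prod := by
            congr 1
            congr 1
            exact List.map_congr_left IH
        _ = Zw W ^ cs.length * Uw W (PROB.conj cs) τ := hUc.symm
decreasing_by
  all_goals simp_wf
  all_goals try omega
  all_goals (have h := List.sizeOf_lt_of_mem hc; omega)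

end PROB
/-- Correctness of INC (Proposition 2): on a satisfiable smooth,
deterministic, decomposable PROB with positive-weight-induced branch
parameters, the sampler outputs each satisfying assignment `τ` with
probability `W(τ) / Σ_{τ' ⊨ F} W(τ')`, and non-satisfying assignments with
probability 0. -/
theorem stmt_9 {V : Type} [Fintype V] [DecidableEq V]
    (D : PROB V) (hD : D.Wf) (hvars : D.vars = Finset.univ)
    (W : V → Bool → ℝ) (hW : ∀ v b, 0 < W v b)
    (hsat : ∃ τ : V → Bool, D.satb τ = true) :
    ∀ τ : V → Bool,
      D.sampP W τ =
        if D.satb τ = true then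
          (∏ v : V, W v (τ v)) /
            ∑ τ' ∈ Finset.univ.filter (fun τ' : V → Bool => D.satb τ' = true),
              ∏ v : V, W v (τ' v)
        else 0 := by
  classical
  intro τ
  by_cases hs : D.satb τ = true
  · rw [if_pos hs]
    have hB := PROB.sampP_sat W hW D τ hD hs
    have hT : (0:ℝ) < PROB.Tw W D := PROB.Tw_pos hW hs
    have hU : PROB.Uw W D τ = ∏ v : V, W v (τ v) := by
      rw [PROB.Uw]
      have : ∀ σ : V → Bool,
          (if (∀ v ∈ D.vars, σ v = τ v) then ∏ v, W v (σ v) else 0) =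
          (if σ = τ then ∏ v, W v (σ v) else 0) := by
        intro σ
        refine if_congr ?_ rfl rfl
        rw [hvars]
        constructor
        · intro h; funext v; exact h v (Finset.mem_univ v)
        · intro h v _; rw [h]
      rw [Finset.sum_congr rfl fun σ _ => this σ]
      rw [Finset.sum_ite_eq' Finset.univ τ (fun σ => ∏ v, W v (σ v))]
      rw [if_pos (Finset.mem_univ τ)]
    have hTfilter : PROB.Tw W D =
        ∑ τ' ∈ Finset.univ.filter (fun τ' : V → Bool => D.satb τ' = true),
          ∏ v : V, W v (τ' v) := by
      rw [PROB.Tw, Finset.sum_filter]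
    rw [← hTfilter, ← hU, eq_div_iff (ne_of_gt hT)]
    exact hB
  · rw [if_neg hs]
    exact PROB.sampP_unsat W D τ (by simpa using hs)
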